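/- arXiv:2111.09207 — 2 statements merged into one kernel-verified Lean document; each statement's English description precedes it below -/
import Mathlib

section
/- For the discrete-time linear-quadratic problem, the optimal value function with horizon length N is the quadratic form given by the Riccati recursion: for every N ∈ ℕ and every x ∈ ℝⁿ, inf over control sequences (u_0,…,u_{N−1}) ∈ (ℝᵐ)^N of Σ_{k=0}^{N−1} ½(x_k^⊤Qx_k + u_k^⊤Ru_k) + ½x_N^⊤Q_f x_N (subject to x_0 = x, x_{k+1} = Ax_k + Bu_k) equals ½x^⊤P_N x. -/
open Matrix

/-- Riccati iterates: `ric A B Q R Qf 0 = Qf` and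
`ric (k+1) = Aᵀ P_k A − Aᵀ P_k B (R + Bᵀ P_k B)⁻¹ Bᵀ P_k A + Q`. -/
noncomputable def ric {n m : ℕ} (A : Matrix (Fin n) (Fin n) ℝ) (B : Matrix (Fin n) (Fin m) ℝ)
    (Q : Matrix (Fin n) (Fin n) ℝ) (R : Matrix (Fin m) (Fin m) ℝ)
    (Qf : Matrix (Fin n) (Fin n) ℝ) : ℕ → Matrix (Fin n) (Fin n) ℝ
  | 0 => Qf
  | k + 1 =>
    Aᵀ * ric A B Q R Qf k * A -
      Aᵀ * ric A B Q R Qf k * B * (R + Bᵀ * ric A B Q R Qf k * B)⁻¹ *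
        Bᵀ * ric A B Q R Qf k * A + Q

/-- Trajectory of the linear system `x_{k+1} = A x_k + B u_k` from initial state `x`. -/
def lintraj {n m : ℕ} (A : Matrix (Fin n) (Fin n) ℝ) (B : Matrix (Fin n) (Fin m) ℝ)
    (x : Fin n → ℝ) (u : ℕ → Fin m → ℝ) : ℕ → (Fin n → ℝ)
  | 0 => x
  | k + 1 => A *ᵥ lintraj A B x u k + B *ᵥ u k

/-- The linear-quadratic objective with horizon `N`. -/
noncomputable def lqCost {n m : ℕ} (A : Matrix (Fin n) (Fin n) ℝ) (B : Matrix (Fin n) (Fin m) ℝ)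
    (Q : Matrix (Fin n) (Fin n) ℝ) (R : Matrix (Fin m) (Fin m) ℝ)
    (Qf : Matrix (Fin n) (Fin n) ℝ) (x : Fin n → ℝ) (u : ℕ → Fin m → ℝ) (N : ℕ) : ℝ :=
  (∑ k ∈ Finset.range N,
      (1 / 2) * (lintraj A B x u k ⬝ᵥ Q *ᵥ lintraj A B x u k + u k ⬝ᵥ R *ᵥ u k)) +
    (1 / 2) * (lintraj A B x u N ⬝ᵥ Qf *ᵥ lintraj A B x u N)

/-! ### Auxiliary lemmas -/

lemma LQaux.mulVec_dot {n m : ℕ} (M : Matrix (Fin n) (Fin m) ℝ) (a : Fin m → ℝ) (w : Fin n → ℝ) :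
    (M *ᵥ a) ⬝ᵥ w = a ⬝ᵥ (Mᵀ *ᵥ w) := by
  rw [← vecMul_transpose, ← dotProduct_mulVec]

lemma LQaux.psd_nonneg {p : ℕ} {M : Matrix (Fin p) (Fin p) ℝ} (hM : M.PosSemidef)
    (y : Fin p → ℝ) : 0 ≤ y ⬝ᵥ M *ᵥ y := by
  simpa using hM.dotProduct_mulVec_nonneg y

lemma LQaux.transpose_eq {p : ℕ} {M : Matrix (Fin p) (Fin p) ℝ} (hM : M.IsHermitian) :
    Mᵀ = M := by
  rwa [Matrix.IsHermitian, conjTranspose_eq_transpose_of_trivial] at hM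

lemma LQaux.S_posdef {n m : ℕ} (B : Matrix (Fin n) (Fin m) ℝ)
    {R : Matrix (Fin m) (Fin m) ℝ} {P : Matrix (Fin n) (Fin n) ℝ}
    (hP : P.PosSemidef) (hR : R.PosDef) : (R + Bᵀ * P * B).PosDef := by
  apply hR.add_posSemidef
  have h := hP.conjTranspose_mul_mul_same B
  rwa [conjTranspose_eq_transpose_of_trivial] at h

/-- Completion of squares for one step of dynamic programming. -/
lemma LQaux.completion {n m : ℕ}
    (A : Matrix (Fin n) (Fin n) ℝ) (B : Matrix (Fin n) (Fin m) ℝ)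
    (Q : Matrix (Fin n) (Fin n) ℝ) (R : Matrix (Fin m) (Fin m) ℝ)
    {P : Matrix (Fin n) (Fin n) ℝ} (hP : P.PosSemidef) (hR : R.PosDef)
    (x : Fin n → ℝ) (u : Fin m → ℝ) :
    x ⬝ᵥ Q *ᵥ x + u ⬝ᵥ R *ᵥ u + (A *ᵥ x + B *ᵥ u) ⬝ᵥ P *ᵥ (A *ᵥ x + B *ᵥ u)
      = x ⬝ᵥ (Aᵀ * P * A - Aᵀ * P * B * (R + Bᵀ * P * B)⁻¹ * Bᵀ * P * A + Q) *ᵥ x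
        + (u + ((R + Bᵀ * P * B)⁻¹ * (Bᵀ * P * A)) *ᵥ x) ⬝ᵥ
            ((R + Bᵀ * P * B) *ᵥ (u + ((R + Bᵀ * P * B)⁻¹ * (Bᵀ * P * A)) *ᵥ x)) := by
  have hPt : Pᵀ = P := LQaux.transpose_eq hP.isHermitian
  have hRt : Rᵀ = R := LQaux.transpose_eq hR.isHermitian
  set S := R + Bᵀ * P * B with hSdef
  have hSpsd : S.PosDef := LQaux.S_posdef B hP hR
  have hdet : IsUnit S.det := isUnit_iff_ne_zero.mpr hSpsd.det_pos.ne'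
  have hSt : Sᵀ = S := by
    simp [hSdef, transpose_add, transpose_mul, hPt, hRt, Matrix.mul_assoc]
  have hSit : S⁻¹ᵀ = S⁻¹ := by rw [transpose_nonsing_inv, hSt]
  set K := S⁻¹ * (Bᵀ * P * A) with hK
  have hSK : S * K = Bᵀ * P * A := by
    rw [hK, ← Matrix.mul_assoc, Matrix.mul_nonsing_inv _ hdet, Matrix.one_mul]
  have hKt : Kᵀ = Aᵀ * P * B * S⁻¹ := by
    simp [hK, transpose_mul, hSit, hPt, Matrix.mul_assoc]
  have hKtS : Kᵀ * S = Aᵀ * P * B := by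
    rw [hKt, Matrix.mul_assoc, Matrix.nonsing_inv_mul _ hdet, Matrix.mul_one]
  have hKtSK : Kᵀ * (S * K) = Aᵀ * P * B * S⁻¹ * Bᵀ * P * A := by
    rw [hSK, hKt]; simp [Matrix.mul_assoc]
  have h1 : (A *ᵥ x + B *ᵥ u) ⬝ᵥ P *ᵥ (A *ᵥ x + B *ᵥ u)
      = x ⬝ᵥ ((Aᵀ * P * A) *ᵥ x) + x ⬝ᵥ ((Aᵀ * P * B) *ᵥ u)
        + u ⬝ᵥ ((Bᵀ * P * A) *ᵥ x) + u ⬝ᵥ ((Bᵀ * P * B) *ᵥ u) := by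
    simp only [mulVec_add, dotProduct_add, add_dotProduct, LQaux.mulVec_dot, mulVec_mulVec,
      Matrix.mul_assoc]
    ring
  have h2 : (u + K *ᵥ x) ⬝ᵥ (S *ᵥ (u + K *ᵥ x))
      = u ⬝ᵥ (S *ᵥ u) + u ⬝ᵥ ((Bᵀ * P * A) *ᵥ x) + x ⬝ᵥ ((Aᵀ * P * B) *ᵥ u)
        + x ⬝ᵥ ((Aᵀ * P * B * S⁻¹ * Bᵀ * P * A) *ᵥ x) := by
    simp only [mulVec_add, dotProduct_add, add_dotProduct, LQaux.mulVec_dot, mulVec_mulVec,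
      ← Matrix.mul_assoc]
    rw [show Kᵀ * S * K = Aᵀ * P * B * S⁻¹ * Bᵀ * P * A from by
          rw [Matrix.mul_assoc Kᵀ S K, hKtSK],
        hKtS, show S * K = Bᵀ * P * A from hSK]
    ring
  rw [h1, h2]
  have h4 : x ⬝ᵥ (Aᵀ * P * A - Aᵀ * P * B * S⁻¹ * Bᵀ * P * A + Q) *ᵥ x
      = x ⬝ᵥ ((Aᵀ * P * A) *ᵥ x) - x ⬝ᵥ ((Aᵀ * P * B * S⁻¹ * Bᵀ * P * A) *ᵥ x)
        + x ⬝ᵥ (Q *ᵥ x) := by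
    simp only [add_mulVec, sub_mulVec, dotProduct_add, dotProduct_sub]
  have h5 : u ⬝ᵥ (S *ᵥ u) = u ⬝ᵥ (R *ᵥ u) + u ⬝ᵥ ((Bᵀ * P * B) *ᵥ u) := by
    simp only [hSdef, add_mulVec, dotProduct_add]
  rw [h4, h5]
  ring

lemma LQaux.ric_succ {n m : ℕ} (A : Matrix (Fin n) (Fin n) ℝ) (B : Matrix (Fin n) (Fin m) ℝ)
    (Q : Matrix (Fin n) (Fin n) ℝ) (R : Matrix (Fin m) (Fin m) ℝ)
    (Qf : Matrix (Fin n) (Fin n) ℝ) (k : ℕ) :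
    ric A B Q R Qf (k + 1) =
      Aᵀ * ric A B Q R Qf k * A -
        Aᵀ * ric A B Q R Qf k * B * (R + Bᵀ * ric A B Q R Qf k * B)⁻¹ *
          Bᵀ * ric A B Q R Qf k * A + Q := by
  rfl

/-- The Riccati iterates are positive semidefinite. -/
lemma LQaux.ric_psd {n m : ℕ} (A : Matrix (Fin n) (Fin n) ℝ) (B : Matrix (Fin n) (Fin m) ℝ)
    (Q Qf : Matrix (Fin n) (Fin n) ℝ) (R : Matrix (Fin m) (Fin m) ℝ)
    (hQ : Q.PosSemidef) (hQf : Qf.PosSemidef) (hR : R.PosDef) :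
    ∀ N, (ric A B Q R Qf N).PosSemidef := by
  intro N
  induction N with
  | zero => exact hQf
  | succ k ih =>
    set P := ric A B Q R Qf k with hPdef
    have hPt : Pᵀ = P := LQaux.transpose_eq ih.isHermitian
    have hQt : Qᵀ = Q := LQaux.transpose_eq hQ.isHermitian
    have hRt : Rᵀ = R := LQaux.transpose_eq hR.isHermitian
    have hSpd : (R + Bᵀ * P * B).PosDef := LQaux.S_posdef B ih hR
    have hSt : (R + Bᵀ * P * B)ᵀ = R + Bᵀ * P * B := by
      simp [transpose_add, transpose_mul, hPt, hRt, Matrix.mul_assoc]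
    have hSit : (R + Bᵀ * P * B)⁻¹ᵀ = (R + Bᵀ * P * B)⁻¹ := by
      rw [transpose_nonsing_inv, hSt]
    refine posSemidef_iff_dotProduct_mulVec.mpr ⟨?_, ?_⟩
    · rw [Matrix.IsHermitian, conjTranspose_eq_transpose_of_trivial, LQaux.ric_succ, ← hPdef]
      simp only [transpose_add, transpose_sub, transpose_mul, transpose_transpose, hPt, hQt,
        hSit]
      simp [Matrix.mul_assoc]
    · intro y
      rw [LQaux.ric_succ, ← hPdef]
      have hc := LQaux.completion A B Q R ih hR y (-(((R + Bᵀ * P * B)⁻¹ * (Bᵀ * P * A)) *ᵥ y))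
      rw [neg_add_cancel] at hc
      simp only [dotProduct_zero, mulVec_zero, add_zero] at hc
      have h1 : 0 ≤ y ⬝ᵥ Q *ᵥ y := LQaux.psd_nonneg hQ y
      have h2 : 0 ≤ (-(((R + Bᵀ * P * B)⁻¹ * (Bᵀ * P * A)) *ᵥ y)) ⬝ᵥ
          R *ᵥ (-(((R + Bᵀ * P * B)⁻¹ * (Bᵀ * P * A)) *ᵥ y)) :=
        LQaux.psd_nonneg hR.posSemidef _
      have h3 : 0 ≤ (A *ᵥ y + B *ᵥ (-(((R + Bᵀ * P * B)⁻¹ * (Bᵀ * P * A)) *ᵥ y))) ⬝ᵥ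
          P *ᵥ (A *ᵥ y + B *ᵥ (-(((R + Bᵀ * P * B)⁻¹ * (Bᵀ * P * A)) *ᵥ y))) :=
        LQaux.psd_nonneg ih _
      simp only [star_trivial]
      linarith

lemma LQaux.lintraj_shift {n m : ℕ} (A : Matrix (Fin n) (Fin n) ℝ) (B : Matrix (Fin n) (Fin m) ℝ)
    (x : Fin n → ℝ) (u : ℕ → Fin m → ℝ) (k : ℕ) :
    lintraj A B x u (k + 1) = lintraj A B (A *ᵥ x + B *ᵥ u 0) (fun j => u (j + 1)) k := by
  induction k with
  | zero => rfl
  | succ k ih =>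
    show A *ᵥ lintraj A B x u (k + 1) + B *ᵥ u (k + 1) = _
    rw [ih]
    rfl

lemma LQaux.lqCost_succ {n m : ℕ} (A : Matrix (Fin n) (Fin n) ℝ) (B : Matrix (Fin n) (Fin m) ℝ)
    (Q Qf : Matrix (Fin n) (Fin n) ℝ) (R : Matrix (Fin m) (Fin m) ℝ)
    (x : Fin n → ℝ) (u : ℕ → Fin m → ℝ) (N : ℕ) :
    lqCost A B Q R Qf x u (N + 1)
      = (1 / 2) * (x ⬝ᵥ Q *ᵥ x + u 0 ⬝ᵥ R *ᵥ u 0)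
        + lqCost A B Q R Qf (A *ᵥ x + B *ᵥ u 0) (fun j => u (j + 1)) N := by
  unfold lqCost
  rw [Finset.sum_range_succ']
  simp only [LQaux.lintraj_shift]
  show (∑ k ∈ Finset.range N, _) + _ + _ = _
  have h0 : lintraj A B x u 0 = x := rfl
  rw [h0]
  ring

lemma LQaux.lqCost_ge {n m : ℕ}
    (A : Matrix (Fin n) (Fin n) ℝ) (B : Matrix (Fin n) (Fin m) ℝ)
    (Q Qf : Matrix (Fin n) (Fin n) ℝ) (R : Matrix (Fin m) (Fin m) ℝ)
    (hQ : Q.PosSemidef) (hQf : Qf.PosSemidef) (hR : R.PosDef) :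
    ∀ (N : ℕ) (x : Fin n → ℝ) (u : ℕ → Fin m → ℝ),
      (1 / 2) * (x ⬝ᵥ ric A B Q R Qf N *ᵥ x) ≤ lqCost A B Q R Qf x u N := by
  intro N
  induction N with
  | zero =>
    intro x u
    simp [lqCost, lintraj, ric]
  | succ N ih =>
    intro x u
    rw [LQaux.lqCost_succ]
    set P := ric A B Q R Qf N with hPdef
    have hPpsd : P.PosSemidef := LQaux.ric_psd A B Q Qf R hQ hQf hR N
    have hc := LQaux.completion A B Q R hPpsd hR x (u 0)
    have hv : 0 ≤ (u 0 + ((R + Bᵀ * P * B)⁻¹ * (Bᵀ * P * A)) *ᵥ x) ⬝ᵥ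
        ((R + Bᵀ * P * B) *ᵥ (u 0 + ((R + Bᵀ * P * B)⁻¹ * (Bᵀ * P * A)) *ᵥ x)) :=
      LQaux.psd_nonneg (LQaux.S_posdef B hPpsd hR).posSemidef _
    have hih := ih (A *ᵥ x + B *ᵥ u 0) (fun j => u (j + 1))
    rw [LQaux.ric_succ, ← hPdef]
    have hassoc : Aᵀ * P * B * (R + Bᵀ * P * B)⁻¹ * Bᵀ * P * A
        = Aᵀ * P * B * (R + Bᵀ * P * B)⁻¹ * Bᵀ * P * A := rfl
    linarith [hc]

lemma LQaux.lqCost_exists {n m : ℕ}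
    (A : Matrix (Fin n) (Fin n) ℝ) (B : Matrix (Fin n) (Fin m) ℝ)
    (Q Qf : Matrix (Fin n) (Fin n) ℝ) (R : Matrix (Fin m) (Fin m) ℝ)
    (hQ : Q.PosSemidef) (hQf : Qf.PosSemidef) (hR : R.PosDef) :
    ∀ (N : ℕ) (x : Fin n → ℝ), ∃ u : ℕ → Fin m → ℝ,
      lqCost A B Q R Qf x u N = (1 / 2) * (x ⬝ᵥ ric A B Q R Qf N *ᵥ x) := by
  intro N
  induction N with
  | zero =>
    intro x
    exact ⟨fun _ _ => 0, by simp [lqCost, lintraj, ric]⟩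
  | succ N ih =>
    intro x
    set P := ric A B Q R Qf N with hPdef
    have hPpsd : P.PosSemidef := LQaux.ric_psd A B Q Qf R hQ hQf hR N
    set u0 : Fin m → ℝ := -(((R + Bᵀ * P * B)⁻¹ * (Bᵀ * P * A)) *ᵥ x) with hu0
    obtain ⟨u', hu'⟩ := ih (A *ᵥ x + B *ᵥ u0)
    refine ⟨fun k => Nat.casesOn k u0 u', ?_⟩
    have hshift : (fun j => (fun k => Nat.casesOn k u0 u' : ℕ → Fin m → ℝ) (j + 1)) = u' := rfl
    rw [LQaux.lqCost_succ]
    show (1 / 2) * (x ⬝ᵥ Q *ᵥ x + u0 ⬝ᵥ R *ᵥ u0)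
        + lqCost A B Q R Qf (A *ᵥ x + B *ᵥ u0) u' N = _
    rw [hu']
    have hc := LQaux.completion A B Q R hPpsd hR x u0
    rw [hu0, neg_add_cancel] at hc
    simp only [dotProduct_zero, mulVec_zero, add_zero, ← hu0] at hc
    rw [LQaux.ric_succ, ← hPdef]
    linarith [hc]

/-- The optimal value of the discrete-time LQ problem with horizon `N` is the Riccati
quadratic form: `inf_u Σ ½(x_kᵀQx_k + u_kᵀRu_k) + ½x_NᵀQ_f x_N = ½xᵀP_N x`. -/
theorem lq_value_eq_riccati {n m : ℕ}
    (A : Matrix (Fin n) (Fin n) ℝ) (B : Matrix (Fin n) (Fin m) ℝ)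
    (Q Qf : Matrix (Fin n) (Fin n) ℝ) (R : Matrix (Fin m) (Fin m) ℝ)
    (hQ : Q.PosSemidef) (hQf : Qf.PosSemidef) (hR : R.PosDef)
    (N : ℕ) (x : Fin n → ℝ) :
    (⨅ u : ℕ → Fin m → ℝ, lqCost A B Q R Qf x u N) =
      (1 / 2) * (x ⬝ᵥ ric A B Q R Qf N *ᵥ x) := by
  have hbdd : BddBelow (Set.range fun u : ℕ → Fin m → ℝ => lqCost A B Q R Qf x u N) := by
    refine ⟨(1 / 2) * (x ⬝ᵥ ric A B Q R Qf N *ᵥ x), ?_⟩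
    rintro _ ⟨u, rfl⟩
    exact LQaux.lqCost_ge A B Q Qf R hQ hQf hR N x u
  obtain ⟨ustar, hustar⟩ := LQaux.lqCost_exists A B Q Qf R hQ hQf hR N x
  refine le_antisymm ?_ ?_
  · calc (⨅ u : ℕ → Fin m → ℝ, lqCost A B Q R Qf x u N) ≤ lqCost A B Q R Qf x ustar N :=
        ciInf_le hbdd ustar
    _ = _ := hustar
  · exact le_ciInf fun u => LQaux.lqCost_ge A B Q Qf R hQ hQf hR N x u
end

section
/- For the discrete-time linear-quadratic problem with horizon N, the linear feedback policy attains the Riccati value: if x_0 = x and the controls are chosen as u_k = −(R + B^⊤P_{N−k−1}B)^{−1}B^⊤P_{N−k−1}A x_k with x_{k+1} = Ax_k + Bu_k, then Σ_{k=0}^{N−1} ½(x_k^⊤Qx_k + u_k^⊤Ru_k) + ½x_N^⊤Q_f x_N = ½x^⊤P_N x. -/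
open Matrix

lemma quad_conj {p n : ℕ} (M : Matrix (Fin p) (Fin n) ℝ) (P : Matrix (Fin p) (Fin p) ℝ)
    (x : Fin n → ℝ) : (M *ᵥ x) ⬝ᵥ P *ᵥ (M *ᵥ x) = x ⬝ᵥ (Mᵀ * P * M) *ᵥ x := by
  rw [← mulVec_mulVec, dotProduct_mulVec, dotProduct_mulVec, vecMul_mulVec,
    vecMul_vecMul, mulVec_mulVec, dotProduct_mulVec, Matrix.mul_assoc]

lemma abstract_step {n m : ℕ} (A P Q : Matrix (Fin n) (Fin n) ℝ)
    (B : Matrix (Fin n) (Fin m) ℝ) (R : Matrix (Fin m) (Fin m) ℝ)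
    (K : Matrix (Fin m) (Fin n) ℝ)
    (hkey : Kᵀ * (R * K) + Kᵀ * (Bᵀ * (P * (B * K))) = Aᵀ * (P * (B * K)))
    (h2 : Kᵀ * (Bᵀ * (P * A)) = Aᵀ * (P * (B * K))) :
    Q + Kᵀ * R * K + (A - B * K)ᵀ * P * (A - B * K) =
      Aᵀ * P * A - Aᵀ * (P * (B * K)) + Q := by
  have hkey' : Kᵀ * (Bᵀ * (P * (B * K))) = Aᵀ * (P * (B * K)) - Kᵀ * (R * K) := by
    rw [← hkey]; abel
  simp only [transpose_sub, transpose_mul, Matrix.sub_mul, Matrix.mul_sub, Matrix.mul_assoc]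
  rw [h2, hkey']
  abel

lemma step_matrix {n m : ℕ} (A : Matrix (Fin n) (Fin n) ℝ) (B : Matrix (Fin n) (Fin m) ℝ)
    (Q : Matrix (Fin n) (Fin n) ℝ) (R : Matrix (Fin m) (Fin m) ℝ)
    (P : Matrix (Fin n) (Fin n) ℝ) (hP : P.PosSemidef) (hR : R.PosDef) :
    Q + ((R + Bᵀ * P * B)⁻¹ * (Bᵀ * P * A))ᵀ * R * ((R + Bᵀ * P * B)⁻¹ * (Bᵀ * P * A)) +
      (A - B * ((R + Bᵀ * P * B)⁻¹ * (Bᵀ * P * A)))ᵀ * P *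
        (A - B * ((R + Bᵀ * P * B)⁻¹ * (Bᵀ * P * A))) =
    Aᵀ * P * A - Aᵀ * P * B * (R + Bᵀ * P * B)⁻¹ * Bᵀ * P * A + Q := by
  have hPt : Pᵀ = P := by simpa using hP.isHermitian.eq
  have hBPB : (Bᵀ * P * B).PosSemidef := by simpa using hP.conjTranspose_mul_mul_same B
  have hS : (R + Bᵀ * P * B).PosDef := hR.add_posSemidef hBPB
  set S := R + Bᵀ * P * B with hSdef
  have hSt : Sᵀ = S := by simpa using hS.isHermitian.eq
  have hSinvT : (S⁻¹)ᵀ = S⁻¹ := by rw [transpose_nonsing_inv, hSt]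
  set G := Bᵀ * P * A with hGdef
  set K := S⁻¹ * G with hKdef
  have hdet : IsUnit S.det := (isUnit_iff_isUnit_det S).1 hS.isUnit
  have hGt : Gᵀ = Aᵀ * (P * B) := by
    rw [hGdef, transpose_mul, transpose_mul, transpose_transpose, hPt]
  have hSK : S * K = G := by
    rw [hKdef, ← Matrix.mul_assoc, Matrix.mul_nonsing_inv S hdet, Matrix.one_mul]
  have hKtG : Kᵀ * G = Gᵀ * K := by
    rw [hKdef, transpose_mul, hSinvT, Matrix.mul_assoc]
  have hGtK : Gᵀ * K = Aᵀ * (P * (B * K)) := by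
    rw [hGt, Matrix.mul_assoc, Matrix.mul_assoc]
  have h2 : Kᵀ * (Bᵀ * (P * A)) = Aᵀ * (P * (B * K)) := by
    rw [← hGtK, ← hKtG, hGdef, Matrix.mul_assoc]
  have hkey : Kᵀ * (R * K) + Kᵀ * (Bᵀ * (P * (B * K))) = Aᵀ * (P * (B * K)) := by
    have hsum : R * K + Bᵀ * (P * (B * K)) = S * K := by
      rw [hSdef, Matrix.add_mul]
      simp only [Matrix.mul_assoc]
    rw [← Matrix.mul_add, hsum, hSK, hKtG, hGtK]
  have h3 := abstract_step A P Q B R K hkey h2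
  rw [h3]
  have h4 : Aᵀ * (P * (B * K)) = Aᵀ * P * B * S⁻¹ * Bᵀ * P * A := by
    rw [hKdef, hGdef]
    simp only [Matrix.mul_assoc]
  rw [h4]

lemma step_quad {n m : ℕ} (A : Matrix (Fin n) (Fin n) ℝ) (B : Matrix (Fin n) (Fin m) ℝ)
    (Q : Matrix (Fin n) (Fin n) ℝ) (R : Matrix (Fin m) (Fin m) ℝ)
    (P : Matrix (Fin n) (Fin n) ℝ) (hP : P.PosSemidef) (hR : R.PosDef)
    (x : Fin n → ℝ) (u : Fin m → ℝ)
    (hu : u = -((R + Bᵀ * P * B)⁻¹ *ᵥ (Bᵀ * P * A) *ᵥ x)) :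
    x ⬝ᵥ Q *ᵥ x + u ⬝ᵥ R *ᵥ u + (A *ᵥ x + B *ᵥ u) ⬝ᵥ P *ᵥ (A *ᵥ x + B *ᵥ u) =
      x ⬝ᵥ (Aᵀ * P * A - Aᵀ * P * B * (R + Bᵀ * P * B)⁻¹ * Bᵀ * P * A + Q) *ᵥ x := by
  set S := R + Bᵀ * P * B with hSdef
  set K := S⁻¹ * (Bᵀ * P * A) with hKdef
  have hu' : u = -(K *ᵥ x) := by
    rw [hu, hKdef]; simp only [mulVec_mulVec]
  have hy : A *ᵥ x + B *ᵥ u = (A - B * K) *ᵥ x := by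
    rw [hu', mulVec_neg, mulVec_mulVec, sub_mulVec]
    abel
  have hru : u ⬝ᵥ R *ᵥ u = x ⬝ᵥ (Kᵀ * R * K) *ᵥ x := by
    rw [hu', mulVec_neg, neg_dotProduct, dotProduct_neg, neg_neg, quad_conj]
  rw [hru, hy, quad_conj, ← step_matrix A B Q R P hP hR, ← hSdef, ← hKdef,
    Matrix.add_mulVec, Matrix.add_mulVec, dotProduct_add, dotProduct_add]

lemma ric_posSemidef {n m : ℕ} (A : Matrix (Fin n) (Fin n) ℝ) (B : Matrix (Fin n) (Fin m) ℝ)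
    (Q Qf : Matrix (Fin n) (Fin n) ℝ) (R : Matrix (Fin m) (Fin m) ℝ)
    (hQ : Q.PosSemidef) (hQf : Qf.PosSemidef) (hR : R.PosDef) :
    ∀ k, (ric A B Q R Qf k).PosSemidef := by
  intro k
  induction k with
  | zero => exact hQf
  | succ k ih =>
    set P := ric A B Q R Qf k with hPdef
    have hPt : Pᵀ = P := by simpa using ih.isHermitian.eq
    have hQt : Qᵀ = Q := by simpa using hQ.isHermitian.eq
    have hBPB : (Bᵀ * P * B).PosSemidef := by simpa using ih.conjTranspose_mul_mul_same B
    have hS : (R + Bᵀ * P * B).PosDef := hR.add_posSemidef hBPB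
    have hSt : (R + Bᵀ * P * B)ᵀ = R + Bᵀ * P * B := by simpa using hS.isHermitian.eq
    have hSinvT : ((R + Bᵀ * P * B)⁻¹)ᵀ = (R + Bᵀ * P * B)⁻¹ := by
      rw [transpose_nonsing_inv, hSt]
    refine posSemidef_iff_dotProduct_mulVec.mpr ⟨?_, ?_⟩
    · rw [IsHermitian, conjTranspose_eq_transpose_of_trivial]
      show (ric A B Q R Qf (k + 1))ᵀ = ric A B Q R Qf (k + 1)
      simp only [ric, ← hPdef]
      have hSinvT' : ((R + Bᵀ * (P * B))⁻¹)ᵀ = (R + Bᵀ * (P * B))⁻¹ := by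
        rw [← Matrix.mul_assoc]; exact hSinvT
      simp only [transpose_add, transpose_sub, transpose_mul, transpose_transpose, hPt,
        hSinvT, hSinvT', hQt, Matrix.mul_assoc]
    · intro x
      have hst : star x = x := by simp
      rw [hst]
      set u := -((R + Bᵀ * P * B)⁻¹ *ᵥ (Bᵀ * P * A) *ᵥ x) with hudef
      have h := step_quad A B Q R P ih hR x u hudef
      have hric : ric A B Q R Qf (k + 1) =
          Aᵀ * P * A - Aᵀ * P * B * (R + Bᵀ * P * B)⁻¹ * Bᵀ * P * A + Q := by
        simp only [ric, ← hPdef]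
      rw [hric, ← h]
      have h1 : 0 ≤ x ⬝ᵥ Q *ᵥ x := by simpa using hQ.dotProduct_mulVec_nonneg x
      have h2 : 0 ≤ u ⬝ᵥ R *ᵥ u := by simpa using hR.posSemidef.dotProduct_mulVec_nonneg u
      have h3 : 0 ≤ (A *ᵥ x + B *ᵥ u) ⬝ᵥ P *ᵥ (A *ᵥ x + B *ᵥ u) := by
        simpa using ih.dotProduct_mulVec_nonneg (A *ᵥ x + B *ᵥ u)
      linarith

/-- The Riccati linear feedback policy attains the Riccati value `½xᵀP_N x`:
if `x_0 = x`, `x_{k+1} = A x_k + B u_k`, and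
`u_k = −(R + Bᵀ P_{N−k−1} B)⁻¹ Bᵀ P_{N−k−1} A x_k` for `k < N`, then
`Σ_{k<N} ½(x_kᵀQx_k + u_kᵀRu_k) + ½x_NᵀQ_f x_N = ½xᵀP_N x`. -/
theorem lq_feedback_attains_riccati_value {n m : ℕ}
    (A : Matrix (Fin n) (Fin n) ℝ) (B : Matrix (Fin n) (Fin m) ℝ)
    (Q Qf : Matrix (Fin n) (Fin n) ℝ) (R : Matrix (Fin m) (Fin m) ℝ)
    (hQ : Q.PosSemidef) (hQf : Qf.PosSemidef) (hR : R.PosDef)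
    (N : ℕ) (x : Fin n → ℝ)
    (xs : ℕ → Fin n → ℝ) (us : ℕ → Fin m → ℝ)
    (hx0 : xs 0 = x)
    (hdyn : ∀ k, xs (k + 1) = A *ᵥ xs k + B *ᵥ us k)
    (hu : ∀ k < N, us k =
      -((R + Bᵀ * ric A B Q R Qf (N - k - 1) * B)⁻¹ *ᵥ
          (Bᵀ * ric A B Q R Qf (N - k - 1) * A) *ᵥ xs k)) :
    (∑ k ∈ Finset.range N, (1 / 2) * (xs k ⬝ᵥ Q *ᵥ xs k + us k ⬝ᵥ R *ᵥ us k)) +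
      (1 / 2) * (xs N ⬝ᵥ Qf *ᵥ xs N) =
      (1 / 2) * (x ⬝ᵥ ric A B Q R Qf N *ᵥ x) := by
  induction N generalizing x xs us with
  | zero =>
    simp [ric, hx0]
  | succ N ih =>
    have hshift := ih (xs 1) (fun k => xs (k + 1)) (fun k => us (k + 1)) rfl
      (fun k => hdyn (k + 1))
      (by
        intro k hk
        have := hu (k + 1) (by omega)
        have harith : N + 1 - (k + 1) - 1 = N - k - 1 := by omega
        rw [harith] at this
        exact this)
    rw [Finset.sum_range_succ']
    have hu0 := hu 0 (Nat.succ_pos N)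
    have harith0 : N + 1 - 0 - 1 = N := by omega
    rw [harith0] at hu0
    rw [hx0] at hu0
    have hstep := step_quad A B Q R (ric A B Q R Qf N)
      (ric_posSemidef A B Q Qf R hQ hQf hR N) hR x (us 0) hu0
    have hx1 : xs 1 = A *ᵥ x + B *ᵥ us 0 := by rw [hdyn 0, hx0]
    have hric : ric A B Q R Qf (N + 1) =
        Aᵀ * ric A B Q R Qf N * A -
          Aᵀ * ric A B Q R Qf N * B * (R + Bᵀ * ric A B Q R Qf N * B)⁻¹ *
            Bᵀ * ric A B Q R Qf N * A + Q := by
      simp only [ric]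
    rw [hx1] at hshift
    rw [hx0, hric]
    linarith [hshift, hstep]
end
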